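/- Let (G, G_+) be a countable, weakly unperforated, directed partially ordered abelian group with the Riesz interpolation property. Let a_1, …, a_m and b_1, …, b_n be elements of G_+ with Σ_{i=1}^m a_i = Σ_{j=1}^n b_j, and let R ⊆ {1, …, m} × {1, …, n} be such that for every subset A ⊆ {1, …, m}, Σ_{i∈A} a_i ≤ Σ_{j∈R_A} b_j. Then there exist c_{ij} ∈ G_+ (1 ≤ i ≤ m, 1 ≤ j ≤ n) such that Σ_{j=1}^n c_{ij} = a_i for every i, Σ_{i=1}^m c_{ij} = b_j for every j, and c_{ij} = 0 unless (i, j) ∈ R. -/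

import Mathlib

/-- For `R ⊆ {1,…,m} × {1,…,n}` and `A ⊆ {1,…,m}`, the set
`R_A = {j : (i,j) ∈ R for some i ∈ A}`. -/
def RA {m n : ℕ} (R : Finset (Fin m × Fin n)) (A : Finset (Fin m)) : Finset (Fin n) :=
  (R.filter (fun p => p.1 ∈ A)).image Prod.snd

section Aux

variable {G : Type*} [AddCommGroup G] [PartialOrder G] [IsOrderedAddMonoid G]

/-- Interpolation between two lower bounds and finitely many upper bounds. -/
private lemma interp_two_many
    (hriesz : ∀ a₁ a₂ b₁ b₂ : G, a₁ ≤ b₁ → a₁ ≤ b₂ → a₂ ≤ b₁ → a₂ ≤ b₂ →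
      ∃ c : G, a₁ ≤ c ∧ a₂ ≤ c ∧ c ≤ b₁ ∧ c ≤ b₂)
    {κ : Type*} (t : Finset κ) (g : κ → G) :
    t.Nonempty → ∀ l₁ l₂ : G, (∀ j ∈ t, l₁ ≤ g j) → (∀ j ∈ t, l₂ ≤ g j) →
    ∃ c, l₁ ≤ c ∧ l₂ ≤ c ∧ ∀ j ∈ t, c ≤ g j := by
  induction t using Finset.cons_induction with
  | empty => rintro ⟨x, hx⟩; cases hx
  | cons j t hj IH =>
    intro _ l₁ l₂ h1 h2
    rcases t.eq_empty_or_nonempty with rfl | hne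
    · obtain ⟨c, hc1, hc2, hc3, _⟩ := hriesz l₁ l₂ (g j) (g j) (h1 j (by simp))
        (h1 j (by simp)) (h2 j (by simp)) (h2 j (by simp))
      refine ⟨c, hc1, hc2, ?_⟩
      intro x hx
      have : x = j := by simpa using hx
      exact this ▸ hc3
    · obtain ⟨c₀, hc₀1, hc₀2, hc₀3⟩ := IH hne l₁ l₂
        (fun x hx => h1 x (Finset.mem_cons_of_mem hx))
        (fun x hx => h2 x (Finset.mem_cons_of_mem hx))
      obtain ⟨c, hc1, hc2, hc3, hc4⟩ := hriesz l₁ l₂ c₀ (g j) hc₀1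
        (h1 j (Finset.mem_cons_self _ _)) hc₀2 (h2 j (Finset.mem_cons_self _ _))
      refine ⟨c, hc1, hc2, ?_⟩
      intro x hx
      rcases Finset.mem_cons.1 hx with rfl | hx
      · exact hc4
      · exact hc3.trans (hc₀3 x hx)

/-- Interpolation between finitely many lower bounds and finitely many upper bounds. -/
private lemma interp_many
    (hriesz : ∀ a₁ a₂ b₁ b₂ : G, a₁ ≤ b₁ → a₁ ≤ b₂ → a₂ ≤ b₁ → a₂ ≤ b₂ →
      ∃ c : G, a₁ ≤ c ∧ a₂ ≤ c ∧ c ≤ b₁ ∧ c ≤ b₂)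
    {ι κ : Type*} (s : Finset ι) (t : Finset κ) (f : ι → G) (g : κ → G) :
    s.Nonempty → t.Nonempty → (∀ i ∈ s, ∀ j ∈ t, f i ≤ g j) →
    ∃ c, (∀ i ∈ s, f i ≤ c) ∧ ∀ j ∈ t, c ≤ g j := by
  induction s using Finset.cons_induction with
  | empty => rintro ⟨x, hx⟩; cases hx
  | cons i s hi IH =>
    intro _ ht h
    rcases s.eq_empty_or_nonempty with rfl | hne
    · obtain ⟨c, hc1, _, hc3⟩ := interp_two_many hriesz t g ht (f i) (f i)
        (fun j hj => h i (by simp) j hj) (fun j hj => h i (by simp) j hj)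
      refine ⟨c, ?_, hc3⟩
      intro x hx
      have : x = i := by simpa using hx
      exact this ▸ hc1
    · obtain ⟨c₀, hc₀1, hc₀2⟩ := IH hne ht
        (fun x hx => h x (Finset.mem_cons_of_mem hx))
      obtain ⟨c, hc1, hc2, hc3⟩ := interp_two_many hriesz t g ht (f i) c₀
        (fun j hj => h i (Finset.mem_cons_self _ _) j hj) hc₀2
      refine ⟨c, ?_, hc3⟩
      intro x hx
      rcases Finset.mem_cons.1 hx with rfl | hx
      · exact hc1
      · exact (hc₀1 x hx).trans hc2

private lemma mem_RA {m n : ℕ} {R : Finset (Fin m × Fin n)} {A : Finset (Fin m)} {j : Fin n} :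
    j ∈ RA R A ↔ ∃ i ∈ A, (i, j) ∈ R := by
  simp only [RA, Finset.mem_image, Finset.mem_filter]
  constructor
  · rintro ⟨⟨i, j'⟩, ⟨hR, hA⟩, rfl⟩; exact ⟨i, hA, hR⟩
  · rintro ⟨i, hA, hRm⟩; exact ⟨(i, j), ⟨hRm, hA⟩, rfl⟩

private lemma RA_union {m n : ℕ} (R : Finset (Fin m × Fin n)) (A₁ A₂ : Finset (Fin m)) :
    RA R (A₁ ∪ A₂) = RA R A₁ ∪ RA R A₂ := by
  ext j
  simp only [mem_RA, Finset.mem_union]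
  constructor
  · rintro ⟨i, hi | hi, hiR⟩
    · exact Or.inl ⟨i, hi, hiR⟩
    · exact Or.inr ⟨i, hi, hiR⟩
  · rintro (⟨i, hi, hiR⟩ | ⟨i, hi, hiR⟩)
    · exact ⟨i, Or.inl hi, hiR⟩
    · exact ⟨i, Or.inr hi, hiR⟩

/-- The main lemma: only Riesz interpolation is needed.  Proof by induction on `R`. -/
private lemma main_lemma
    (hriesz : ∀ a₁ a₂ b₁ b₂ : G, a₁ ≤ b₁ → a₁ ≤ b₂ → a₂ ≤ b₁ → a₂ ≤ b₂ →
      ∃ c : G, a₁ ≤ c ∧ a₂ ≤ c ∧ c ≤ b₁ ∧ c ≤ b₂)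
    {m n : ℕ} (R : Finset (Fin m × Fin n)) :
    ∀ (a : Fin m → G) (b : Fin n → G), (∀ i, 0 ≤ a i) → (∀ j, 0 ≤ b j) →
      ∑ i, a i = ∑ j, b j →
      (∀ A : Finset (Fin m), ∑ i ∈ A, a i ≤ ∑ j ∈ RA R A, b j) →
      ∃ c : Fin m → Fin n → G,
        (∀ i j, 0 ≤ c i j) ∧ (∀ i, ∑ j, c i j = a i) ∧
        (∀ j, ∑ i, c i j = b j) ∧ (∀ i j, (i, j) ∉ R → c i j = 0) := by
  induction R using Finset.strongInductionOn with
  | _ R IH =>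
  intro a b ha hb hsum hR
  rcases R.eq_empty_or_nonempty with rfl | ⟨⟨i₀, j₀⟩, hmem⟩
  · -- base case: `R = ∅`, so all `a i = 0` and all `b j = 0`.
    have hA : ∑ i, a i ≤ 0 := by simpa [RA] using hR Finset.univ
    have ha0 : ∀ i, a i = 0 := by
      intro i
      refine le_antisymm ?_ (ha i)
      calc a i ≤ ∑ i', a i' :=
            Finset.single_le_sum (fun i' _ => ha i') (Finset.mem_univ i)
        _ ≤ 0 := hA
    have hb0 : ∀ j, b j = 0 := by
      intro j
      refine le_antisymm ?_ (hb j)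
      calc b j ≤ ∑ j', b j' :=
            Finset.single_le_sum (fun j' _ => hb j') (Finset.mem_univ j)
        _ = ∑ i, a i := hsum.symm
        _ ≤ 0 := hA
    exact ⟨fun _ _ => 0, fun _ _ => le_rfl, fun i => by simp [ha0],
      fun j => by simp [hb0], fun _ _ _ => rfl⟩
  · -- inductive step
    classical
    set R' := R.erase (i₀, j₀) with hR'def
    have hss : R' ⊂ R := Finset.erase_ssubset hmem
    have ra_sub : ∀ A : Finset (Fin m), RA R' A ⊆ RA R A := by
      intro A j hj
      obtain ⟨i, h1, h2⟩ := mem_RA.1 hj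
      exact mem_RA.2 ⟨i, h1, Finset.mem_of_mem_erase h2⟩
    -- key inequality used for compatibility of the bounds
    have key : ∀ A₁ A₂ : Finset (Fin m), i₀ ∈ A₁ → (∀ i ∈ A₁, (i, j₀) ∈ R → i = i₀) →
        i₀ ∉ A₂ → j₀ ∈ RA R A₂ →
        b j₀ + (∑ i ∈ A₁, a i + ∑ i ∈ A₂, a i) ≤
          ∑ j ∈ RA R A₁, b j + ∑ j ∈ RA R A₂, b j := by
      intro A₁ A₂ h1 h2 h3 h4
      have hj1 : j₀ ∈ RA R A₁ := mem_RA.2 ⟨i₀, h1, hmem⟩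
      have hjI : j₀ ∈ RA R A₁ ∩ RA R A₂ := Finset.mem_inter.2 ⟨hj1, h4⟩
      have hnotin : j₀ ∉ RA R (A₁ ∩ A₂) := by
        intro hj
        obtain ⟨i, hiA, hiR⟩ := mem_RA.1 hj
        have h5 := Finset.mem_inter.1 hiA
        exact h3 (h2 i h5.1 hiR ▸ h5.2)
      have hsubI : insert j₀ (RA R (A₁ ∩ A₂)) ⊆ RA R A₁ ∩ RA R A₂ := by
        intro j hj
        rcases Finset.mem_insert.1 hj with rfl | hj
        · exact hjI
        · obtain ⟨i, hiA, hiR⟩ := mem_RA.1 hj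
          have h5 := Finset.mem_inter.1 hiA
          exact Finset.mem_inter.2 ⟨mem_RA.2 ⟨i, h5.1, hiR⟩, mem_RA.2 ⟨i, h5.2, hiR⟩⟩
      have e1 : b j₀ + ∑ j ∈ RA R (A₁ ∩ A₂), b j ≤ ∑ j ∈ RA R A₁ ∩ RA R A₂, b j := by
        have h6 := Finset.sum_le_sum_of_subset_of_nonneg hsubI (fun j _ _ => hb j)
        rwa [Finset.sum_insert hnotin] at h6
      have e2 : ∑ i ∈ A₁ ∩ A₂, a i ≤ ∑ j ∈ RA R (A₁ ∩ A₂), b j := hR _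
      have e3 : ∑ i ∈ A₁ ∪ A₂, a i ≤ ∑ j ∈ RA R A₁ ∪ RA R A₂, b j := by
        have := hR (A₁ ∪ A₂)
        rwa [RA_union] at this
      have hYsum : ∑ i ∈ A₁ ∪ A₂, a i + ∑ i ∈ A₁ ∩ A₂, a i
          = ∑ i ∈ A₁, a i + ∑ i ∈ A₂, a i := Finset.sum_union_inter
      have hXsum : ∑ j ∈ RA R A₁ ∪ RA R A₂, b j + ∑ j ∈ RA R A₁ ∩ RA R A₂, b j
          = ∑ j ∈ RA R A₁, b j + ∑ j ∈ RA R A₂, b j := Finset.sum_union_inter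
      calc b j₀ + (∑ i ∈ A₁, a i + ∑ i ∈ A₂, a i)
          = ∑ i ∈ A₁ ∪ A₂, a i + (b j₀ + ∑ i ∈ A₁ ∩ A₂, a i) := by rw [← hYsum]; abel
        _ ≤ ∑ j ∈ RA R A₁ ∪ RA R A₂, b j + ∑ j ∈ RA R A₁ ∩ RA R A₂, b j :=
            add_le_add e3 ((add_le_add_right e2 _).trans e1)
        _ = ∑ j ∈ RA R A₁, b j + ∑ j ∈ RA R A₂, b j := hXsum
    -- second key inequality: lower bounds are at most `a i₀`
    have keyA : ∀ A₁ : Finset (Fin m), i₀ ∈ A₁ → (∀ i ∈ A₁, (i, j₀) ∈ R → i = i₀) →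
        b j₀ + ∑ i ∈ A₁, a i ≤ a i₀ + ∑ j ∈ RA R A₁, b j := by
      intro A₁ h1 h2
      have hj1 : j₀ ∈ RA R A₁ := mem_RA.2 ⟨i₀, h1, hmem⟩
      have hsub : RA R (A₁.erase i₀) ⊆ (RA R A₁).erase j₀ := by
        intro j hj
        obtain ⟨i, hiA, hiR⟩ := mem_RA.1 hj
        have hi' := Finset.mem_erase.1 hiA
        refine Finset.mem_erase.2 ⟨?_, mem_RA.2 ⟨i, hi'.2, hiR⟩⟩
        rintro rfl
        exact hi'.1 (h2 i hi'.2 hiR)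
      have e5 : ∑ i ∈ A₁.erase i₀, a i ≤ ∑ j ∈ (RA R A₁).erase j₀, b j :=
        (hR _).trans (Finset.sum_le_sum_of_subset_of_nonneg hsub (fun j _ _ => hb j))
      have e6 : ∑ i ∈ A₁.erase i₀, a i + a i₀ = ∑ i ∈ A₁, a i :=
        Finset.sum_erase_add _ _ h1
      have e7 : ∑ j ∈ (RA R A₁).erase j₀, b j + b j₀ = ∑ j ∈ RA R A₁, b j :=
        Finset.sum_erase_add _ _ hj1
      calc b j₀ + ∑ i ∈ A₁, a i = (∑ i ∈ A₁.erase i₀, a i + b j₀) + a i₀ := by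
            rw [← e6]; abel
        _ ≤ (∑ j ∈ (RA R A₁).erase j₀, b j + b j₀) + a i₀ :=
            add_le_add_left (add_le_add_left e5 _) _
        _ = a i₀ + ∑ j ∈ RA R A₁, b j := by rw [e7]; abel
    -- set up the interpolation problem
    set Lset : Finset (Finset (Fin m)) :=
      Finset.univ.filter (fun A => i₀ ∈ A ∧ ∀ i ∈ A, (i, j₀) ∈ R → i = i₀) with hLset
    set Uset : Finset (Finset (Fin m)) :=
      Finset.univ.filter (fun A => i₀ ∉ A ∧ j₀ ∈ RA R A) with hUset
    set fL : Option (Finset (Fin m)) → G :=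
      fun o => o.elim 0 (fun A => b j₀ - ((∑ j ∈ RA R A, b j) - ∑ i ∈ A, a i)) with hfL
    set gU : (Finset (Fin m)) ⊕ Bool → G :=
      Sum.elim (fun A => (∑ j ∈ RA R A, b j) - ∑ i ∈ A, a i)
        (fun x => if x then a i₀ else b j₀) with hgU
    have hT0 : ∀ A : Finset (Fin m), (0 : G) ≤ (∑ j ∈ RA R A, b j) - ∑ i ∈ A, a i :=
      fun A => sub_nonneg.2 (hR A)
    obtain ⟨g, hgLow, hgUp⟩ := interp_many hriesz
      (insert none (Lset.image some))
      ((Uset.image Sum.inl) ∪ {Sum.inr true, Sum.inr false}) fL gU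
      ⟨none, Finset.mem_insert_self _ _⟩
      ⟨Sum.inr true, Finset.mem_union_right _ (by simp)⟩
      (by
        rintro x hx y hy
        have hy' : (∃ A ∈ Uset, y = Sum.inl A) ∨ y = Sum.inr true ∨ y = Sum.inr false := by
          rcases Finset.mem_union.1 hy with h | h
          · obtain ⟨A, hA, rfl⟩ := Finset.mem_image.1 h
            exact Or.inl ⟨A, hA, rfl⟩
          · right
            simpa using h
        have hx' : x = none ∨ ∃ A ∈ Lset, x = some A := by
          rcases Finset.mem_insert.1 hx with h | h
          · exact Or.inl h
          · obtain ⟨A, hA, rfl⟩ := Finset.mem_image.1 h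
            exact Or.inr ⟨A, hA, rfl⟩
        rcases hx' with rfl | ⟨A₁, hA₁, rfl⟩
        · rcases hy' with ⟨A₂, hA₂, rfl⟩ | rfl | rfl
          · simpa [hfL, hgU] using hT0 A₂
          · simpa [hfL, hgU] using ha i₀
          · simpa [hfL, hgU] using hb j₀
        · have hA₁' := (Finset.mem_filter.1 hA₁).2
          rcases hy' with ⟨A₂, hA₂, rfl⟩ | rfl | rfl
          · have hA₂' := (Finset.mem_filter.1 hA₂).2
            have hk := key A₁ A₂ hA₁'.1 hA₁'.2 hA₂'.1 hA₂'.2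
            simp only [hfL, hgU, Option.elim, Sum.elim_inl]
            rw [sub_sub_eq_add_sub, sub_le_sub_iff]
            calc b j₀ + ∑ i ∈ A₁, a i + ∑ i ∈ A₂, a i
                = b j₀ + (∑ i ∈ A₁, a i + ∑ i ∈ A₂, a i) := by abel
              _ ≤ ∑ j ∈ RA R A₁, b j + ∑ j ∈ RA R A₂, b j := hk
              _ = ∑ j ∈ RA R A₂, b j + ∑ j ∈ RA R A₁, b j := by abel
          · have hk := keyA A₁ hA₁'.1 hA₁'.2
            simp only [hfL, hgU, Option.elim, Sum.elim_inr, if_pos]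
            rw [sub_sub_eq_add_sub, sub_le_iff_le_add]
            calc b j₀ + ∑ i ∈ A₁, a i ≤ a i₀ + ∑ j ∈ RA R A₁, b j := hk
              _ = a i₀ + ∑ j ∈ RA R A₁, b j := rfl
          · simp only [hfL, hgU, Option.elim, Sum.elim_inr, Bool.false_eq_true, if_neg,
              ite_false]
            exact sub_le_self _ (hT0 A₁))
    -- extract the individual bounds on `g`
    have hg0 : (0 : G) ≤ g := by
      simpa [hfL] using hgLow none (Finset.mem_insert_self _ _)
    have hgLA : ∀ A : Finset (Fin m), i₀ ∈ A → (∀ i ∈ A, (i, j₀) ∈ R → i = i₀) →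
        b j₀ - ((∑ j ∈ RA R A, b j) - ∑ i ∈ A, a i) ≤ g := by
      intro A h1 h2
      have hA : A ∈ Lset := Finset.mem_filter.2 ⟨Finset.mem_univ _, h1, h2⟩
      simpa [hfL] using hgLow (some A)
        (Finset.mem_insert_of_mem (Finset.mem_image_of_mem some hA))
    have hgUa : g ≤ a i₀ := by
      simpa [hgU] using hgUp (Sum.inr true) (Finset.mem_union_right _ (by simp))
    have hgUb : g ≤ b j₀ := by
      simpa [hgU] using hgUp (Sum.inr false) (Finset.mem_union_right _ (by simp))
    have hgUA : ∀ A : Finset (Fin m), i₀ ∉ A → j₀ ∈ RA R A →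
        g ≤ (∑ j ∈ RA R A, b j) - ∑ i ∈ A, a i := by
      intro A h1 h2
      have hA : A ∈ Uset := Finset.mem_filter.2 ⟨Finset.mem_univ _, h1, h2⟩
      simpa [hgU] using hgUp (Sum.inl A)
        (Finset.mem_union_left _ (Finset.mem_image_of_mem Sum.inl hA))
    -- the reduced data
    set a' : Fin m → G := Function.update a i₀ (a i₀ - g) with ha'def
    set b' : Fin n → G := Function.update b j₀ (b j₀ - g) with hb'def
    have sum_a'_mem : ∀ s : Finset (Fin m), i₀ ∈ s →
        ∑ i ∈ s, a' i = (∑ i ∈ s, a i) - g := by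
      intro s hs
      rw [ha'def, Finset.sum_update_of_mem hs, ← Finset.sum_erase_add s a hs,
        Finset.sdiff_singleton_eq_erase]
      abel
    have sum_a'_not : ∀ s : Finset (Fin m), i₀ ∉ s →
        ∑ i ∈ s, a' i = ∑ i ∈ s, a i := by
      intro s hs
      refine Finset.sum_congr rfl (fun i hi => ?_)
      rw [ha'def]
      exact Function.update_of_ne (fun h => hs (by rwa [h] at hi)) _ _
    have sum_b'_mem : ∀ s : Finset (Fin n), j₀ ∈ s →
        ∑ j ∈ s, b' j = (∑ j ∈ s, b j) - g := by
      intro s hs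
      rw [hb'def, Finset.sum_update_of_mem hs, ← Finset.sum_erase_add s b hs,
        Finset.sdiff_singleton_eq_erase]
      abel
    have sum_b'_not : ∀ s : Finset (Fin n), j₀ ∉ s →
        ∑ j ∈ s, b' j = ∑ j ∈ s, b j := by
      intro s hs
      refine Finset.sum_congr rfl (fun j hj => ?_)
      rw [hb'def]
      exact Function.update_of_ne (fun h => hs (by rwa [h] at hj)) _ _
    have ha' : ∀ i, 0 ≤ a' i := by
      intro i
      rw [ha'def]
      by_cases h : i = i₀
      · subst h; rw [Function.update_self]; exact sub_nonneg.2 hgUa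
      · rw [Function.update_of_ne h]; exact ha i
    have hb' : ∀ j, 0 ≤ b' j := by
      intro j
      rw [hb'def]
      by_cases h : j = j₀
      · subst h; rw [Function.update_self]; exact sub_nonneg.2 hgUb
      · rw [Function.update_of_ne h]; exact hb j
    have hsum' : ∑ i, a' i = ∑ j, b' j := by
      rw [sum_a'_mem Finset.univ (Finset.mem_univ _),
        sum_b'_mem Finset.univ (Finset.mem_univ _), hsum]
    -- the Hall condition for the reduced data
    have hall' : ∀ A : Finset (Fin m), ∑ i ∈ A, a' i ≤ ∑ j ∈ RA R' A, b' j := by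
      intro A
      by_cases hiA : i₀ ∈ A
      · by_cases hjA : j₀ ∈ RA R' A
        · have hRA : RA R' A = RA R A := by
            refine Finset.Subset.antisymm (ra_sub A) (fun j hj => ?_)
            obtain ⟨i, hi, hiR⟩ := mem_RA.1 hj
            by_cases hij : (i, j) = (i₀, j₀)
            · rw [show j = j₀ from (Prod.ext_iff.1 hij).2]
              exact hjA
            · exact mem_RA.2 ⟨i, hi, Finset.mem_erase.2 ⟨hij, hiR⟩⟩
          have hj₀A : j₀ ∈ RA R A := hRA ▸ hjA
          rw [hRA, sum_a'_mem A hiA, sum_b'_mem _ hj₀A]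
          exact sub_le_sub_right (hR A) g
        · have hL : ∀ i ∈ A, (i, j₀) ∈ R → i = i₀ := by
            intro i hi hiR
            by_contra hne
            refine hjA (mem_RA.2 ⟨i, hi, Finset.mem_erase.2 ⟨?_, hiR⟩⟩)
            simpa [Prod.ext_iff] using hne
          have hj₀A : j₀ ∈ RA R A := mem_RA.2 ⟨i₀, hiA, hmem⟩
          have hRA : RA R' A = (RA R A).erase j₀ := by
            refine Finset.Subset.antisymm (fun j hj => ?_) (fun j hj => ?_)
            · refine Finset.mem_erase.2 ⟨?_, ra_sub A hj⟩
              rintro rfl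
              exact hjA hj
            · obtain ⟨hne, hj2⟩ := Finset.mem_erase.1 hj
              obtain ⟨i, hi, hiR⟩ := mem_RA.1 hj2
              exact mem_RA.2 ⟨i, hi,
                Finset.mem_erase.2 ⟨fun h => hne (Prod.ext_iff.1 h).2, hiR⟩⟩
          rw [hRA, sum_a'_mem A hiA,
            sum_b'_not _ (fun h => (Finset.mem_erase.1 h).1 rfl)]
          have hbd := hgLA A hiA hL
          have h1 : b j₀ ≤ g + ((∑ j ∈ RA R A, b j) - ∑ i ∈ A, a i) :=
            sub_le_iff_le_add.1 hbd
          have h2 : ∑ i ∈ A, a i - g ≤ ∑ j ∈ RA R A, b j - b j₀ := by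
            rw [sub_le_sub_iff]
            calc ∑ i ∈ A, a i + b j₀
                ≤ ∑ i ∈ A, a i + (g + ((∑ j ∈ RA R A, b j) - ∑ i ∈ A, a i)) :=
                  add_le_add_right h1 _
              _ = ∑ j ∈ RA R A, b j + g := by abel
          have h3 : ∑ j ∈ (RA R A).erase j₀, b j = ∑ j ∈ RA R A, b j - b j₀ :=
            eq_sub_of_add_eq (Finset.sum_erase_add _ _ hj₀A)
          rw [h3]
          exact h2
      · have hRA : RA R' A = RA R A := by
          refine Finset.Subset.antisymm (ra_sub A) (fun j hj => ?_)
          obtain ⟨i, hi, hiR⟩ := mem_RA.1 hj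
          refine mem_RA.2 ⟨i, hi, Finset.mem_erase.2 ⟨?_, hiR⟩⟩
          intro h
          have hii : i = i₀ := (Prod.ext_iff.1 h).1
          exact hiA (by rwa [hii] at hi)
        rw [hRA, sum_a'_not A hiA]
        by_cases hjA : j₀ ∈ RA R A
        · rw [sum_b'_mem _ hjA]
          have := hgUA A hiA hjA
          rw [le_sub_iff_add_le]
          rw [add_comm]
          exact le_sub_iff_add_le.1 this
        · rw [sum_b'_not _ hjA]
          exact hR A
    -- apply the induction hypothesis
    obtain ⟨c', hc0, hcrow, hccol, hcsupp⟩ := IH R' hss a' b' ha' hb' hsum' hall'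
    refine ⟨fun i j => c' i j + if i = i₀ ∧ j = j₀ then g else 0, ?_, ?_, ?_, ?_⟩
    · intro i j
      refine add_nonneg (hc0 i j) ?_
      split_ifs
      · exact hg0
      · exact le_rfl
    · intro i
      rw [Finset.sum_add_distrib, hcrow i]
      by_cases hi : i = i₀
      · have h4 : ∑ j, (if i = i₀ ∧ j = j₀ then g else (0 : G)) = g := by simp [hi]
        rw [h4, ha'def, hi, Function.update_self]
        exact sub_add_cancel _ _
      · have h4 : ∑ j, (if i = i₀ ∧ j = j₀ then g else (0 : G)) = 0 := by simp [hi]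
        rw [h4, add_zero, ha'def, Function.update_of_ne hi]
    · intro j
      rw [Finset.sum_add_distrib, hccol j]
      by_cases hj : j = j₀
      · have h4 : ∑ i, (if i = i₀ ∧ j = j₀ then g else (0 : G)) = g := by simp [hj]
        rw [h4, hb'def, hj, Function.update_self]
        exact sub_add_cancel _ _
      · have h4 : ∑ i, (if i = i₀ ∧ j = j₀ then g else (0 : G)) = 0 := by simp [hj]
        rw [h4, add_zero, hb'def, Function.update_of_ne hj]
    · intro i j h
      have h1 : (i, j) ∉ R' := fun hh => h (Finset.mem_of_mem_erase hh)
      have h2 : ¬(i = i₀ ∧ j = j₀) := by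
        rintro ⟨rfl, rfl⟩
        exact h hmem
      show c' i j + (if i = i₀ ∧ j = j₀ then g else 0) = 0
      rw [hcsupp i j h1, if_neg h2, add_zero]

end Aux

theorem stmt_11 {G : Type*} [AddCommGroup G] [PartialOrder G] [IsOrderedAddMonoid G] [Countable G]
    (hdirected : ∀ g : G, ∃ a b : G, 0 ≤ a ∧ 0 ≤ b ∧ g = a - b)
    (hwunperf : ∀ (g : G) (N : ℕ), 0 < N → 0 < N • g → 0 < g)
    (hriesz : ∀ a₁ a₂ b₁ b₂ : G, a₁ ≤ b₁ → a₁ ≤ b₂ → a₂ ≤ b₁ → a₂ ≤ b₂ →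
      ∃ c : G, a₁ ≤ c ∧ a₂ ≤ c ∧ c ≤ b₁ ∧ c ≤ b₂)
    {m n : ℕ} (a : Fin m → G) (b : Fin n → G)
    (ha : ∀ i, 0 ≤ a i) (hb : ∀ j, 0 ≤ b j)
    (hsum : ∑ i, a i = ∑ j, b j)
    (R : Finset (Fin m × Fin n))
    (hR : ∀ A : Finset (Fin m), ∑ i ∈ A, a i ≤ ∑ j ∈ RA R A, b j) :
    ∃ c : Fin m → Fin n → G,
      (∀ i j, 0 ≤ c i j) ∧
      (∀ i, ∑ j, c i j = a i) ∧
      (∀ j, ∑ i, c i j = b j) ∧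
      (∀ i j, (i, j) ∉ R → c i j = 0) := by
  exact main_lemma hriesz R a b ha hb hsum hR
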